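/- Let A be a finite lattice and let p, q ∈ J(A) be join-irreducible elements. Then p D q (i.e., p ≠ q and there exists x ∈ A with p ≤ q ∨ x and p ≰ q⁎ ∨ x, where q⁎ is the unique lower cover of q) if and only if there exists a minimal pair ⟨p, I⟩ of A with q ∈ I. -/

import Mathlib

open Finset

section Aux

variable {α : Type*} [Lattice α] [Fintype α] [OrderBot α]

/-- Every element of a finite lattice is the sup of a finset of sup-irreducible
elements below it. -/
lemma irr_decomp (b : α) :
    ∃ s : Finset α, s.sup id = b ∧ ∀ a ∈ s, SupIrred a ∧ a ≤ b := by
  obtain ⟨s, hs, hirr⟩ := exists_supIrred_decomposition b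
  exact ⟨s, hs, fun a ha => ⟨hirr ha, hs ▸ le_sup (f := id) ha⟩⟩

/-- Every finset has an antichain of maximal elements covering it. -/
lemma exists_antichain_cover (S : Finset α) :
    ∃ M : Finset α, M ⊆ S ∧ M.sup id = S.sup id ∧ (∀ a ∈ S, ∃ m ∈ M, a ≤ m) ∧
      (∀ m ∈ M, ∀ m' ∈ M, m ≤ m' → m = m') := by
  classical
  refine ⟨S.filter (fun a => ∀ b ∈ S, a ≤ b → a = b), filter_subset _ _, ?_, ?_, ?_⟩
  · have cover : ∀ a ∈ S, ∃ m ∈ S.filter (fun a => ∀ b ∈ S, a ≤ b → a = b), a ≤ m := by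
      intro a ha
      have hT : (S.filter (fun b => a ≤ b)).Nonempty := ⟨a, by simp [ha]⟩
      obtain ⟨m, hm, hmax⟩ := (S.filter (fun b => a ≤ b)).exists_maximal hT
      simp only [mem_filter] at hm
      refine ⟨m, ?_, hm.2⟩
      simp only [mem_filter]
      refine ⟨hm.1, fun b hb hmb => ?_⟩
      rcases eq_or_lt_of_le hmb with h | h
      · exact h
      · exact absurd h (not_lt_of_ge (hmax (by simp [hb, hm.2.trans hmb]) h.le))
    refine le_antisymm (sup_mono (filter_subset _ _)) (Finset.sup_le fun a ha => ?_)
    obtain ⟨m, hm, ham⟩ := cover a ha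
    exact le_trans ham (le_sup (f := id) hm)
  · intro a ha
    have hT : (S.filter (fun b => a ≤ b)).Nonempty := ⟨a, by simp [ha]⟩
    obtain ⟨m, hm, hmax⟩ := (S.filter (fun b => a ≤ b)).exists_maximal hT
    simp only [mem_filter] at hm
    refine ⟨m, ?_, hm.2⟩
    simp only [mem_filter]
    refine ⟨hm.1, fun b hb hmb => ?_⟩
    rcases eq_or_lt_of_le hmb with h | h
    · exact h
    · exact absurd h (not_lt_of_ge (hmax (by simp [hb, hm.2.trans hmb]) h.le))
  · intro m hm m' hm' hle
    simp only [mem_filter] at hm hm'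
    exact hm.2 m' hm'.1 hle

end Aux

/-- A minimal pair `⟨p, I⟩` in a join-semilattice. -/
def MinimalPair {α : Type*} [SemilatticeSup α] (p : α) (I : Finset α) : Prop :=
  SupIrred p ∧ (∀ i ∈ I, SupIrred i) ∧ p ∉ I ∧
    (∃ hI : I.Nonempty, p ≤ I.sup' hI id) ∧
    ∀ J : Finset α, (∀ j ∈ J, SupIrred j) → (∀ j ∈ J, ∃ i ∈ I, j ≤ i) →
      ∀ hJ : J.Nonempty, p ≤ J.sup' hJ id → I ⊆ J

/-- In a finite lattice, for join-irreducibles `p, q` (with `qs` the unique lower cover of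
`q`), `p D q` holds iff there is a minimal pair `⟨p, I⟩` with `q ∈ I`. -/
theorem stmt5 {α : Type*} [Lattice α] [Fintype α] [OrderBot α]
    (p q : α) (hp : SupIrred p) (hq : SupIrred q)
    (qs : α) (hqs : qs ⋖ q) (hqsu : ∀ x : α, x < q → x ≤ qs) :
    (p ≠ q ∧ ∃ x : α, p ≤ q ⊔ x ∧ ¬ p ≤ qs ⊔ x) ↔
      ∃ I : Finset α, MinimalPair p I ∧ q ∈ I := by
  classical
  constructor
  · -- D → minimal pair
    rintro ⟨hpq, x0, hx1, hx2⟩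
    -- The family of candidate sets
    set G : Set (Finset α) := {I | (∀ i ∈ I, SupIrred i) ∧ q ∈ I ∧
      (∀ a ∈ I, ∀ b ∈ I, a ≤ b → a = b) ∧ p ≤ I.sup id ∧
      ¬ p ≤ qs ⊔ (I.erase q).sup id} with hG
    -- G is nonempty
    obtain ⟨s0, hs0sup, hs0⟩ := irr_decomp x0
    obtain ⟨M0, hM0sub, hM0sup, hM0cov, hM0anti⟩ := exists_antichain_cover (insert q s0)
    have hqx0 : ¬ q ≤ x0 := by
      intro h
      exact hx2 (le_trans (le_trans hx1 (by rw [sup_eq_right.mpr h])) le_sup_right)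
    have hM0G : M0 ∈ G := by
      refine ⟨?_, ?_, hM0anti, ?_, ?_⟩
      · intro i hi
        rcases mem_insert.mp (hM0sub hi) with h | h
        · exact h ▸ hq
        · exact (hs0 i h).1
      · obtain ⟨m, hm, hqm⟩ := hM0cov q (mem_insert_self _ _)
        rcases mem_insert.mp (hM0sub hm) with h | h
        · exact h ▸ hm
        · exact absurd (hqm.trans (hs0 m h).2) hqx0
      · rw [hM0sup, sup_insert, hs0sup]
        exact hx1
      · intro h
        apply hx2
        refine h.trans (sup_le_sup_left ?_ qs)
        refine Finset.sup_le fun a ha => ?_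
        have haM0 := mem_of_mem_erase ha
        rcases mem_insert.mp (hM0sub haM0) with h' | h'
        · exact absurd h' (ne_of_mem_erase ha)
        · exact (hs0 a h').2
    -- refinement relation
    set r : Finset α → Finset α → Prop := fun J I =>
      (∀ j ∈ J, ∃ i ∈ I, j ≤ i) ∧ ¬ (∀ i ∈ I, ∃ j ∈ J, i ≤ j) with hr
    haveI : IsTrans (Finset α) r := by
      constructor
      rintro K J I ⟨hKJ, hJK⟩ ⟨hJI, hIJ⟩
      constructor
      · intro k hk
        obtain ⟨j, hj, hkj⟩ := hKJ k hk
        obtain ⟨i, hi, hji⟩ := hJI j hj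
        exact ⟨i, hi, hkj.trans hji⟩
      · intro h
        apply hIJ
        intro i hi
        obtain ⟨k, hk, hik⟩ := h i hi
        obtain ⟨j, hj, hkj⟩ := hKJ k hk
        exact ⟨j, hj, hik.trans hkj⟩
    haveI : IsIrrefl (Finset α) r := by
      constructor
      rintro I ⟨_, h⟩
      exact h fun i hi => ⟨i, hi, le_rfl⟩
    have wf : WellFounded r := Finite.wellFounded_of_trans_of_irrefl r
    obtain ⟨I, hIG, hImin⟩ := wf.has_min G ⟨M0, hM0G⟩
    obtain ⟨hIirr, hqI, hIanti, hIsup, hIq⟩ := hIG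
    -- the key property of the minimal element
    have key : ∀ i ∈ I, ¬ p ≤ (univ.filter (· < i)).sup id ⊔ (I.erase i).sup id := by
      intro i hi hple
      set ist := (univ.filter (· < i)).sup id with hist
      have histle : ist ≤ i := Finset.sup_le fun a ha => (mem_filter.mp ha).2.le
      by_cases hiq : i = q
      · subst hiq
        apply hIq
        refine hple.trans (sup_le_sup_right ?_ _)
        exact Finset.sup_le fun a ha => hqsu a (mem_filter.mp ha).2
      · have histlt : ist < i := by
          refine lt_of_le_of_ne histle fun h => ?_
          obtain ⟨z, hz, hz2⟩ := (hIirr i hi).finset_sup_eq h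
          exact absurd (hz2 ▸ (mem_filter.mp hz).2) (lt_irrefl i)
        obtain ⟨s1, hs1sup, hs1⟩ := irr_decomp ist
        obtain ⟨M, hMsub, hMsup, hMcov, hManti⟩ := exists_antichain_cover ((I.erase i) ∪ s1)
        have hMG : M ∈ G := by
          refine ⟨?_, ?_, hManti, ?_, ?_⟩
          · intro m hm
            rcases mem_union.mp (hMsub hm) with h | h
            · exact hIirr m (mem_of_mem_erase h)
            · exact (hs1 m h).1
          · have hqmem : q ∈ I.erase i ∪ s1 :=
              mem_union_left _ (mem_erase.mpr ⟨fun h => hiq h.symm, hqI⟩)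
            obtain ⟨m, hm, hqm⟩ := hMcov q hqmem
            rcases mem_union.mp (hMsub hm) with h | h
            · exact (hIanti q hqI m (mem_of_mem_erase h) hqm) ▸ hm
            · exact absurd (hIanti q hqI i hi (hqm.trans ((hs1 m h).2.trans histle))).symm hiq
          · rw [hMsup, sup_union, hs1sup, sup_comm]
            exact hple
          · intro h
            apply hIq
            refine h.trans (sup_le_sup_left ?_ qs)
            refine Finset.sup_le fun a ha => ?_
            have haM := mem_of_mem_erase ha
            rcases mem_union.mp (hMsub haM) with h' | h'
            · exact le_sup (f := id)
                (mem_erase.mpr ⟨ne_of_mem_erase ha, mem_of_mem_erase h'⟩)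
            · refine le_trans ((hs1 a h').2.trans histle) ?_
              exact le_sup (f := id) (mem_erase.mpr ⟨fun h'' => hiq h'', hi⟩)
        have hrMI : r M I := by
          constructor
          · intro m hm
            rcases mem_union.mp (hMsub hm) with h | h
            · exact ⟨m, mem_of_mem_erase h, le_rfl⟩
            · exact ⟨i, hi, (hs1 m h).2.trans histle⟩
          · intro hcov
            obtain ⟨m, hm, him⟩ := hcov i hi
            rcases mem_union.mp (hMsub hm) with h | h
            · exact absurd (hIanti i hi m (mem_of_mem_erase h) him).symm (ne_of_mem_erase h)
            · exact absurd (lt_of_le_of_lt (him.trans (hs1 m h).2) histlt) (lt_irrefl i)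
        exact hImin M hMG hrMI
    -- assemble the minimal pair
    have hpnotI : p ∉ I := by
      intro hpI
      exact hIq (le_trans (le_sup (f := id) (mem_erase.mpr ⟨hpq, hpI⟩)) le_sup_right)
    refine ⟨I, ⟨hp, hIirr, hpnotI, ⟨⟨q, hqI⟩, ?_⟩, ?_⟩, hqI⟩
    · refine le_of_le_of_eq ?_ (sup'_eq_sup _ _).symm
      exact hIsup
    · intro J hJirr hJref hJne hJle
      intro i hi
      by_contra hiJ
      apply key i hi
      rw [sup'_eq_sup] at hJle
      refine hJle.trans (Finset.sup_le fun j hj => ?_)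
      obtain ⟨c, hc, hjc⟩ := hJref j hj
      by_cases hci : c = i
      · have hji : j < i := lt_of_le_of_ne (hci ▸ hjc) (fun h => hiJ (h ▸ hj))
        have hjmem : j ∈ univ.filter (· < i) := mem_filter.mpr ⟨mem_univ j, hji⟩
        exact le_trans (le_sup (f := id) hjmem) le_sup_left
      · exact le_trans (le_trans hjc (le_sup (f := id) (mem_erase.mpr ⟨hci, hc⟩))) le_sup_right
  · -- minimal pair → D
    rintro ⟨I, ⟨hpirr, hIirr, hpI, ⟨hIne, hple⟩, hmin⟩, hqI⟩
    have hpq : p ≠ q := fun h => hpI (h ▸ hqI)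
    refine ⟨hpq, (I.erase q).sup id, ?_, ?_⟩
    · rw [sup'_eq_sup] at hple
      calc p ≤ I.sup id := hple
        _ = q ⊔ (I.erase q).sup id := by
          conv_lhs => rw [← insert_erase hqI]
          rw [sup_insert]
          rfl
    · intro hcon
      obtain ⟨s, hssup, hs⟩ := irr_decomp qs
      set J : Finset α := s ∪ I.erase q with hJ
      have hJirr : ∀ j ∈ J, SupIrred j := by
        intro j hj
        rcases mem_union.mp hj with h | h
        · exact (hs j h).1
        · exact hIirr j (mem_of_mem_erase h)
      have hJref : ∀ j ∈ J, ∃ i ∈ I, j ≤ i := by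
        intro j hj
        rcases mem_union.mp hj with h | h
        · exact ⟨q, hqI, (hs j h).2.trans hqs.lt.le⟩
        · exact ⟨j, mem_of_mem_erase h, le_rfl⟩
      have hJsup : J.sup id = qs ⊔ (I.erase q).sup id := by
        rw [hJ, sup_union, hssup]
      have hpJ : p ≤ J.sup id := hJsup ▸ hcon
      have hJne : J.Nonempty := by
        rcases J.eq_empty_or_nonempty with h | h
        · rw [h, Finset.sup_empty] at hpJ
          exact absurd (le_bot_iff.mp hpJ) hp.ne_bot
        · exact h
      have := hmin J hJirr hJref hJne (by rw [sup'_eq_sup]; exact hpJ) hqI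
      rcases mem_union.mp this with h | h
      · exact absurd ((hs q h).2) (not_le_of_gt hqs.lt)
      · exact absurd rfl (ne_of_mem_erase h)
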